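/- arXiv:2205.04299 — 4 statements merged into one kernel-verified Lean document; each statement's English description precedes it below -/
import Mathlib

section
/- Let H be a real Hilbert space, T : H → H a continuous linear self-adjoint operator, δ ∈ H with δ ≠ 0 and T δ = 0, and ρ ∈ ℝ. Define K x = T x + ρ ⟨δ, x⟩ δ. If ψ ∈ H with ψ ≠ 0 and ⟨ψ, δ⟩ ≠ 0 satisfies K ψ = λ ψ for some λ ∈ ℝ, then λ = ρ ‖δ‖². In particular, δ/‖δ‖ is, up to the eigenspace of ρ‖δ‖², the only eigenfunction of K that is not orthogonal to δ. -/
/-- Any eigenfunction of the enhanced operator `K x = T x + ρ ⟨δ, x⟩ δ` that is not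
orthogonal to the jump `δ` must have eigenvalue `ρ‖δ‖²`. -/
theorem enhanced_operator_aligned_eigenvalue
    {H : Type*} [NormedAddCommGroup H] [InnerProductSpace ℝ H] [CompleteSpace H]
    (T : H →L[ℝ] H) (hsa : ∀ x y : H, (inner ℝ (T x) y : ℝ) = inner ℝ x (T y))
    (δ : H) (hδ : δ ≠ 0) (hTδ : T δ = 0) (ρ : ℝ)
    (ψ : H) (hψ : ψ ≠ 0) (halign : (inner ℝ ψ δ : ℝ) ≠ 0) (lam : ℝ)
    (heig : T ψ + (ρ * (inner ℝ δ ψ : ℝ)) • δ = lam • ψ) :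
    lam = ρ * ‖δ‖ ^ 2 := by
  have h0 : (inner ℝ δ (T ψ) : ℝ) = 0 := by
    rw [← hsa, hTδ, inner_zero_left]
  have h := congrArg (fun z => (inner ℝ δ z : ℝ)) heig
  simp only [inner_add_right, inner_smul_right, h0, zero_add,
    real_inner_self_eq_norm_sq] at h
  have hδψ : (inner ℝ δ ψ : ℝ) ≠ 0 := by
    rwa [real_inner_comm] at halign
  have := mul_right_cancel₀ hδψ (by linarith [h] : ρ * ‖δ‖ ^ 2 * inner ℝ δ ψ = lam * inner ℝ δ ψ)
  linarith
end

section
/- Consider the change-point model with grid estimators δ̂_m, and let G be a nonempty finite subset of {1, …, N−1}. The averaged jump estimator δ̂ = (1/|G|) Σ_{m ∈ G} δ̂_m satisfies E δ̂ = C • δ, where C = (1/|G|) Σ_{m ∈ G} c_m with c_m = (N − k*)/(N − m) for m ≤ k* and c_m = k*/m for m > k*, and 0 < C ≤ 1. In particular, if δ ≠ 0 then E δ̂ / ‖E δ̂‖ = δ / ‖δ‖. -/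
open MeasureTheory Finset

/-- The averaged jump estimator `δ̂ = (1/|G|) Σ_{m∈G} δ̂_m` over a finite grid `G` has
expectation `C • δ` with `C = (1/|G|) Σ_{m∈G} c_m ∈ (0, 1]`; in particular, if `δ ≠ 0`,
the direction of `E δ̂` is exactly `δ/‖δ‖`. -/
theorem averaged_jump_estimator_direction
    {Ω : Type*} [MeasurableSpace Ω] (P : Measure Ω) [IsProbabilityMeasure P]
    {H : Type*} [NormedAddCommGroup H] [NormedSpace ℝ H] [CompleteSpace H]
    (N kstar : ℕ) (hk1 : 1 ≤ kstar) (hk2 : kstar ≤ N - 1)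
    (X : ℕ → Ω → H) (hXint : ∀ n, n ∈ Finset.Icc 1 N → Integrable (X n) P)
    (μ0 μ1 δ : H) (hδ : δ = μ0 - μ1)
    (hmean0 : ∀ n, 1 ≤ n → n ≤ kstar → ∫ ω, X n ω ∂P = μ0)
    (hmean1 : ∀ n, kstar < n → n ≤ N → ∫ ω, X n ω ∂P = μ1)
    (c : ℕ → ℝ)
    (hc : ∀ m, c m = if m ≤ kstar then ((N : ℝ) - kstar) / ((N : ℝ) - m)
      else (kstar : ℝ) / m)
    (G : Finset ℕ) (hGne : G.Nonempty) (hGsub : G ⊆ Finset.Icc 1 (N - 1)) :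
    ∀ Ed : H,
      Ed = (∫ ω, (G.card : ℝ)⁻¹ • ∑ m ∈ G,
          ((m : ℝ)⁻¹ • ∑ n ∈ Finset.Icc 1 m, X n ω
            - ((N : ℝ) - m)⁻¹ • ∑ n ∈ Finset.Icc (m + 1) N, X n ω) ∂P) →
        Ed = ((G.card : ℝ)⁻¹ * ∑ m ∈ G, c m) • δ
          ∧ 0 < (G.card : ℝ)⁻¹ * ∑ m ∈ G, c m
          ∧ (G.card : ℝ)⁻¹ * ∑ m ∈ G, c m ≤ 1
          ∧ (δ ≠ 0 → ‖Ed‖⁻¹ • Ed = ‖δ‖⁻¹ • δ) := by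
  intro Ed hEd
  have hkN : kstar < N := by omega
  -- integrability of each term
  have hint1 : ∀ m ∈ G, Integrable (fun ω => (m : ℝ)⁻¹ • ∑ n ∈ Finset.Icc 1 m, X n ω) P := by
    intro m hm
    exact (integrable_finset_sum _ (fun n hn => hXint n (by
      simp only [Finset.mem_Icc] at *
      have := Finset.mem_Icc.mp (hGsub hm); omega))).smul _
  have hint2 : ∀ m ∈ G, Integrable (fun ω => ((N : ℝ) - m)⁻¹ • ∑ n ∈ Finset.Icc (m + 1) N, X n ω) P := by
    intro m hm
    exact (integrable_finset_sum _ (fun n hn => hXint n (by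
      simp only [Finset.mem_Icc] at *; omega))).smul _
  have hintm : ∀ m ∈ G, Integrable (fun ω =>
      ((m : ℝ)⁻¹ • ∑ n ∈ Finset.Icc 1 m, X n ω
        - ((N : ℝ) - m)⁻¹ • ∑ n ∈ Finset.Icc (m + 1) N, X n ω)) P := by
    intro m hm; exact (hint1 m hm).sub (hint2 m hm)
  -- per-m expectation
  have key : ∀ m ∈ G,
      (∫ ω, ((m : ℝ)⁻¹ • ∑ n ∈ Finset.Icc 1 m, X n ω
        - ((N : ℝ) - m)⁻¹ • ∑ n ∈ Finset.Icc (m + 1) N, X n ω) ∂P) = c m • δ := by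
    intro m hm
    obtain ⟨hm1, hm2⟩ := Finset.mem_Icc.mp (hGsub hm)
    have hmN : m < N := by omega
    rw [integral_sub (hint1 m hm) (hint2 m hm), integral_smul, integral_smul,
      integral_finset_sum _ (fun n hn => hXint n (by
        simp only [Finset.mem_Icc] at *; omega)),
      integral_finset_sum _ (fun n hn => hXint n (by
        simp only [Finset.mem_Icc] at *; omega))]
    have hNm : ((N : ℝ) - m) ≠ 0 := by
      have : (m : ℝ) < N := by exact_mod_cast hmN
      linarith
    by_cases hmk : m ≤ kstar
    · -- first sum = m • μ0
      have h1 : ∑ n ∈ Finset.Icc 1 m, ∫ ω, X n ω ∂P = (m : ℕ) • μ0 := by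
        rw [Finset.sum_congr rfl (fun n hn => by
          obtain ⟨h1, h2⟩ := Finset.mem_Icc.mp hn
          exact hmean0 n h1 (le_trans h2 hmk))]
        simp [Nat.card_Icc]
      have h2 : ∑ n ∈ Finset.Icc (m + 1) N, ∫ ω, X n ω ∂P
          = (kstar - m) • μ0 + (N - kstar) • μ1 := by
        rw [Finset.Icc_add_one_left_eq_Ioc, ← Finset.sum_Ioc_consecutive _ hmk (le_of_lt hkN)]
        congr 1
        · rw [Finset.sum_congr rfl (fun n hn => by
            obtain ⟨h1, h2⟩ := Finset.mem_Ioc.mp hn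
            exact hmean0 n (by omega) h2)]
          simp [Nat.card_Ioc]
        · rw [Finset.sum_congr rfl (fun n hn => by
            obtain ⟨h1, h2⟩ := Finset.mem_Ioc.mp hn
            exact hmean1 n h1 h2)]
          simp [Nat.card_Ioc]
      rw [h1, h2, hc, if_pos hmk, hδ]
      have e1 : ((kstar - m : ℕ) : ℝ) = (kstar : ℝ) - m := by
        push_cast [Nat.cast_sub hmk]; ring
      have e2 : ((N - kstar : ℕ) : ℝ) = (N : ℝ) - kstar := by
        push_cast [Nat.cast_sub (le_of_lt hkN)]; ring
      have hm0 : (m : ℝ) ≠ 0 := Nat.cast_ne_zero.mpr (by omega)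
      rw [← Nat.cast_smul_eq_nsmul ℝ, ← Nat.cast_smul_eq_nsmul ℝ, ← Nat.cast_smul_eq_nsmul ℝ, e1, e2]
      match_scalars <;> (field_simp; try ring)
    · push_neg at hmk
      have h1 : ∑ n ∈ Finset.Icc 1 m, ∫ ω, X n ω ∂P
          = kstar • μ0 + (m - kstar) • μ1 := by
        have : Finset.Icc 1 m = Finset.Ioc 0 m := by
          rw [← Finset.Icc_add_one_left_eq_Ioc]; rfl
        rw [this, ← Finset.sum_Ioc_consecutive _ (Nat.zero_le kstar) (le_of_lt hmk)]
        congr 1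
        · rw [Finset.sum_congr rfl (fun n hn => by
            obtain ⟨h1, h2⟩ := Finset.mem_Ioc.mp hn
            exact hmean0 n h1 h2)]
          simp [Nat.card_Ioc]
        · rw [Finset.sum_congr rfl (fun n hn => by
            obtain ⟨h1, h2⟩ := Finset.mem_Ioc.mp hn
            exact hmean1 n h1 (le_trans h2 (le_of_lt hmN)))]
          simp [Nat.card_Ioc]
      have h2 : ∑ n ∈ Finset.Icc (m + 1) N, ∫ ω, X n ω ∂P = (N - m) • μ1 := by
        rw [Finset.sum_congr rfl (fun n hn => by
          obtain ⟨h1, h2⟩ := Finset.mem_Icc.mp hn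
          exact hmean1 n (lt_of_lt_of_le hmk (Nat.lt_of_succ_le h1).le) h2)]
        simp [Nat.card_Icc]
      rw [h1, h2, hc, if_neg (not_le.mpr hmk), hδ]
      have e1 : ((m - kstar : ℕ) : ℝ) = (m : ℝ) - kstar := by
        push_cast [Nat.cast_sub (le_of_lt hmk)]; ring
      have e2 : ((N - m : ℕ) : ℝ) = (N : ℝ) - m := by
        push_cast [Nat.cast_sub (le_of_lt hmN)]; ring
      have hm0 : (m : ℝ) ≠ 0 := Nat.cast_ne_zero.mpr (by omega)
      rw [← Nat.cast_smul_eq_nsmul ℝ, ← Nat.cast_smul_eq_nsmul ℝ, ← Nat.cast_smul_eq_nsmul ℝ, e1, e2]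
      match_scalars <;> (field_simp; try ring)
  -- full expectation
  have hEd' : Ed = ((G.card : ℝ)⁻¹ * ∑ m ∈ G, c m) • δ := by
    rw [hEd, integral_smul, integral_finset_sum _ hintm,
      Finset.sum_congr rfl key, ← Finset.sum_smul, smul_smul]
  -- bounds on individual c m
  have hcpos : ∀ m ∈ G, 0 < c m ∧ c m ≤ 1 := by
    intro m hm
    obtain ⟨hm1, hm2⟩ := Finset.mem_Icc.mp (hGsub hm)
    have hmN : m < N := by omega
    rw [hc]
    by_cases hmk : m ≤ kstar
    · rw [if_pos hmk]
      have h1 : (0 : ℝ) < (N : ℝ) - kstar := by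
        have : (kstar : ℝ) < N := by exact_mod_cast hkN
        linarith
      have h2 : (0 : ℝ) < (N : ℝ) - m := by
        have : (m : ℝ) < N := by exact_mod_cast hmN
        linarith
      have h3 : (N : ℝ) - kstar ≤ (N : ℝ) - m := by
        have : (m : ℝ) ≤ kstar := by exact_mod_cast hmk
        linarith
      exact ⟨div_pos h1 h2, (div_le_one h2).mpr h3⟩
    · push_neg at hmk
      rw [if_neg (not_le.mpr hmk)]
      have h1 : (0 : ℝ) < kstar := by exact_mod_cast hk1
      have h2 : (0 : ℝ) < m := by positivity
      have h3 : (kstar : ℝ) ≤ m := by exact_mod_cast le_of_lt hmk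
      exact ⟨div_pos h1 h2, (div_le_one h2).mpr h3⟩
  have hcard : (0 : ℝ) < G.card := by
    exact_mod_cast Finset.card_pos.mpr hGne
  have hCpos : 0 < (G.card : ℝ)⁻¹ * ∑ m ∈ G, c m := by
    apply mul_pos (inv_pos.mpr hcard)
    exact Finset.sum_pos (fun m hm => (hcpos m hm).1) hGne
  have hCle : (G.card : ℝ)⁻¹ * ∑ m ∈ G, c m ≤ 1 := by
    have hsum : ∑ m ∈ G, c m ≤ G.card := by
      calc ∑ m ∈ G, c m ≤ ∑ m ∈ G, (1 : ℝ) :=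
        Finset.sum_le_sum (fun m hm => (hcpos m hm).2)
      _ = G.card := by simp
    rw [inv_mul_le_iff₀ hcard]
    linarith
  refine ⟨hEd', hCpos, hCle, fun hδ0 => ?_⟩
  rw [hEd']
  have hδn : ‖δ‖ ≠ 0 := norm_ne_zero_iff.mpr hδ0
  rw [norm_smul, Real.norm_eq_abs, abs_of_pos hCpos, smul_smul, mul_inv,
    mul_assoc, mul_comm (‖δ‖)⁻¹, ← mul_assoc, inv_mul_cancel₀ (ne_of_gt hCpos), one_mul]
end

section
/- Let H be a real inner product space, X, δ ∈ H with δ ≠ 0, and κ ≥ 0. Define the shrunk projection Y^{(κ)} = X − (⟨X, δ⟩/(‖δ‖ + κ)²) • δ and the exact projection Y = X − (⟨X, δ⟩/‖δ‖²) • δ. Then ‖Y^{(κ)} − Y‖ ≤ 2κ‖X‖/‖δ‖. -/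
/-- The κ-regularized projection `Y^{(κ)} = X − (⟨X,δ⟩/(‖δ‖+κ)²) δ` is within
`2κ‖X‖/‖δ‖` of the exact orthogonal projection `Y = X − (⟨X,δ⟩/‖δ‖²) δ`. -/
theorem shrunk_projection_close_to_projection
    {H : Type*} [NormedAddCommGroup H] [InnerProductSpace ℝ H]
    (X δ : H) (hδ : δ ≠ 0) (κ : ℝ) (hκ : 0 ≤ κ) :
    ‖(X - ((inner ℝ X δ : ℝ) / (‖δ‖ + κ) ^ 2) • δ)
        - (X - ((inner ℝ X δ : ℝ) / ‖δ‖ ^ 2) • δ)‖ ≤ 2 * κ * ‖X‖ / ‖δ‖ := by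
  set d := ‖δ‖ with hd
  have hd0 : 0 < d := norm_pos_iff.mpr hδ
  have hdk : 0 < d + κ := by linarith
  set a : ℝ := inner ℝ X δ with ha
  have h1 : (X - (a / (d + κ) ^ 2) • δ) - (X - (a / d ^ 2) • δ)
      = (a / d ^ 2 - a / (d + κ) ^ 2) • δ := by
    rw [sub_smul]; abel
  rw [h1, norm_smul, Real.norm_eq_abs]
  have key : a / d ^ 2 - a / (d + κ) ^ 2
      = a * (κ * (2 * d + κ)) / (d ^ 2 * (d + κ) ^ 2) := by
    field_simp; ring
  rw [key, abs_div, abs_mul]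
  have hnn : 0 ≤ κ * (2 * d + κ) := by positivity
  rw [abs_of_nonneg hnn, abs_of_nonneg (by positivity : (0:ℝ) ≤ d ^ 2 * (d + κ) ^ 2)]
  have hab : |a| ≤ ‖X‖ * d := abs_real_inner_le_norm X δ
  rw [div_mul_eq_mul_div, div_le_div_iff₀ (by positivity) hd0]
  have hX : 0 ≤ ‖X‖ := norm_nonneg X
  nlinarith [mul_le_mul_of_nonneg_right hab hnn, sq_nonneg d, sq_nonneg κ,
    mul_nonneg hκ hX, mul_nonneg (mul_nonneg hκ hX) hd0.le,
    mul_nonneg (mul_nonneg (mul_nonneg hκ hX) hd0.le) hd0.le,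
    mul_nonneg (mul_nonneg (mul_nonneg hκ hκ) hX) hd0.le]
end

section
/- Let c₁ > 0, α_w > 0, α_c > 1 and C₀ > 0. Let W : ℝ → ℝ satisfy 0 ≤ W(u) ≤ 1 and 1 − W(u) ≤ c₁|u|^{α_w} for all u ∈ ℝ, and let (a_h)_{h ≥ 1} be real numbers with |a_h| ≤ C₀ h^{−α_c} for all h ≥ 1. Then there exists a constant C > 0, depending only on c₁, α_w, α_c, C₀, such that for every integer ℓ ≥ 2, the kernel-smoothing bias E_ℓ = |Σ_{h=1}^∞ a_h − Σ_{h=1}^ℓ W(h/ℓ) a_h| satisfies: E_ℓ ≤ C ℓ^{1−α_c} if α_w − α_c > −1; E_ℓ ≤ C ℓ^{1−α_c} log ℓ if α_w − α_c = −1; and E_ℓ ≤ C ℓ^{−α_w} if α_w − α_c < −1. -/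
open Finset

private lemma sum_Icc2_le_integral (β : ℝ) (hβ : β ≤ 0) (ℓ : ℕ) (hℓ : 1 ≤ ℓ) :
    ∑ h ∈ Finset.Icc 2 ℓ, ((h : ℝ)) ^ β ≤ ∫ x in (1:ℝ)..(ℓ:ℝ), x ^ β := by
  have hf : AntitoneOn (fun x : ℝ => x ^ β) (Set.Icc ((1:ℕ):ℝ) ((ℓ:ℕ):ℝ)) := by
    intro x hx y hy hxy
    exact Real.rpow_le_rpow_of_nonpos (by exact_mod_cast lt_of_lt_of_le one_pos (by exact_mod_cast hx.1)) hxy hβ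
  have h := AntitoneOn.sum_le_integral_Ico (f := fun x : ℝ => x ^ β) (a := 1) (b := ℓ) hℓ hf
  refine le_trans (le_of_eq ?_) (by exact_mod_cast h)
  rw [show Finset.Icc 2 ℓ = Finset.Ico 2 (ℓ+1) from (Finset.Ico_add_one_right_eq_Icc 2 ℓ).symm,
    Finset.sum_Ico_eq_sum_range, Finset.sum_Ico_eq_sum_range]
  have h2 : ℓ + 1 - 2 = ℓ - 1 := by omega
  rw [h2]
  refine Finset.sum_congr rfl fun j _ => ?_
  congr 1
  push_cast
  ring

private lemma sum_Icc2_rpow_le (β : ℝ) (hβ : β < 0) (hβ1 : β ≠ -1) (ℓ : ℕ) (hℓ : 1 ≤ ℓ) :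
    ∑ h ∈ Finset.Icc 2 ℓ, ((h : ℝ)) ^ β ≤ ((ℓ:ℝ) ^ (β+1) - 1) / (β+1) := by
  refine le_trans (sum_Icc2_le_integral β hβ.le ℓ hℓ) ?_
  rw [integral_rpow (Or.inr ⟨hβ1, by
    rw [Set.uIcc_of_le (by exact_mod_cast hℓ)]
    intro h
    have := (Set.mem_Icc.mp h).1
    linarith⟩)]
  simp [Real.one_rpow]

private lemma sum_Icc2_harmonic_le (ℓ : ℕ) (hℓ : 1 ≤ ℓ) :
    ∑ h ∈ Finset.Icc 2 ℓ, ((h : ℝ)) ^ (-1 : ℝ) ≤ Real.log ℓ := by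
  refine le_trans (sum_Icc2_le_integral (-1) (by norm_num) ℓ hℓ) ?_
  have h0 : (0:ℝ) ∉ Set.uIcc (1:ℝ) (ℓ:ℝ) := by
    rw [Set.uIcc_of_le (by exact_mod_cast hℓ)]
    intro h
    have := (Set.mem_Icc.mp h).1
    linarith
  have : ∫ x in (1:ℝ)..(ℓ:ℝ), x ^ (-1:ℝ) = ∫ x in (1:ℝ)..(ℓ:ℝ), x⁻¹ := by
    refine intervalIntegral.integral_congr fun x hx => ?_
    rw [Real.rpow_neg_one]
  rw [this, integral_inv h0, div_one]

private lemma tail_bound (αc : ℝ) (hαc : 1 < αc) (ℓ : ℕ) (hℓ : 1 ≤ ℓ) :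
    ∑' i : ℕ, ((i + ℓ + 1 : ℕ) : ℝ) ^ (-αc) ≤ (ℓ:ℝ) ^ (1-αc) / (αc - 1) := by
  apply Real.tsum_le_of_sum_range_le (fun n => Real.rpow_nonneg (by positivity) _)
  intro n
  have hℓpos : (0:ℝ) < ℓ := by exact_mod_cast hℓ
  have hf : AntitoneOn (fun x : ℝ => x ^ (-αc)) (Set.Icc ((ℓ:ℕ):ℝ) ((ℓ+n:ℕ):ℝ)) := by
    intro x hx y hy hxy
    exact Real.rpow_le_rpow_of_nonpos (lt_of_lt_of_le (by exact_mod_cast hℓpos) hx.1) hxy (by linarith)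
  have h := AntitoneOn.sum_le_integral_Ico (f := fun x : ℝ => x ^ (-αc)) (a := ℓ) (b := ℓ+n)
    (Nat.le_add_right ℓ n) hf
  have hrw : ∑ i ∈ Finset.range n, ((i + ℓ + 1 : ℕ) : ℝ) ^ (-αc)
      = ∑ i ∈ Finset.Ico ℓ (ℓ+n), (((i + 1 : ℕ) : ℝ)) ^ (-αc) := by
    rw [Finset.sum_Ico_eq_sum_range]
    simp only [Nat.add_sub_cancel_left]
    refine Finset.sum_congr rfl fun j _ => ?_
    congr 2
    omega
  rw [hrw]
  refine le_trans h ?_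
  have h0 : (0:ℝ) ∉ Set.uIcc ((ℓ:ℕ):ℝ) ((ℓ+n:ℕ):ℝ) := by
    rw [Set.uIcc_of_le (by exact_mod_cast Nat.le_add_right ℓ n)]
    intro h
    have := (Set.mem_Icc.mp h).1
    linarith
  rw [integral_rpow (Or.inr ⟨by linarith, h0⟩)]
  have hAB : (0:ℝ) ≤ ((ℓ+n:ℕ):ℝ) ^ (-αc + 1) := Real.rpow_nonneg (by positivity) _
  have hne : -αc + 1 = 1 - αc := by ring
  rw [hne]
  have hflip : (((ℓ+n:ℕ):ℝ) ^ (1-αc) - ((ℓ:ℕ):ℝ) ^ (1-αc)) / (1 - αc)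
      = (((ℓ:ℕ):ℝ) ^ (1-αc) - ((ℓ+n:ℕ):ℝ) ^ (1-αc)) / (αc - 1) := by
    rw [div_eq_div_iff (by linarith) (by linarith)]
    ring
  rw [hflip]
  apply div_le_div_of_nonneg_right ?_ ?_ |>.trans_eq rfl
  · rw [hne] at hAB; linarith
  · linarith

private lemma Icc_split (ℓ : ℕ) (hℓ : 1 ≤ ℓ) :
    Finset.Icc 1 ℓ = insert 1 (Finset.Icc 2 ℓ) := by
  ext x
  simp only [Finset.mem_Icc, Finset.mem_insert]
  omega

private lemma M_bound_gt (β : ℝ) (hβ : -1 < β) (ℓ : ℕ) (hℓ : 1 ≤ ℓ) :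
    ∑ h ∈ Finset.Icc 1 ℓ, ((h:ℝ)) ^ β ≤ (1 + 1/(β+1)) * (ℓ:ℝ) ^ (β+1) := by
  have hℓpos : (0:ℝ) < ℓ := by exact_mod_cast hℓ
  have hb1 : (0:ℝ) < β + 1 := by linarith
  have hone : (1:ℝ) ≤ (ℓ:ℝ) ^ (β+1) := Real.one_le_rpow (by exact_mod_cast hℓ) hb1.le
  rcases le_or_gt 0 β with h0 | h0
  · calc ∑ h ∈ Finset.Icc 1 ℓ, ((h:ℝ)) ^ β ≤ ∑ _h ∈ Finset.Icc 1 ℓ, ((ℓ:ℝ)) ^ β :=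
        Finset.sum_le_sum fun h hh => Real.rpow_le_rpow (by positivity)
          (by exact_mod_cast (Finset.mem_Icc.mp hh).2) h0
    _ = (ℓ:ℝ) * (ℓ:ℝ) ^ β := by
        rw [Finset.sum_const, Nat.card_Icc]
        simp [nsmul_eq_mul]
    _ = (ℓ:ℝ) ^ (β+1) := by rw [Real.rpow_add hℓpos, Real.rpow_one]; ring
    _ ≤ (1 + 1/(β+1)) * (ℓ:ℝ) ^ (β+1) := by
        have h2 : 0 < 1/(β+1) := by positivity
        nlinarith [Real.rpow_nonneg hℓpos.le (β+1)]
  · rw [Icc_split ℓ hℓ, Finset.sum_insert (by simp)]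
    have hsum := sum_Icc2_rpow_le β h0 (by linarith) ℓ hℓ
    have h1p : ((1:ℕ):ℝ) ^ β = 1 := by norm_num
    rw [h1p]
    set L := (ℓ:ℝ) ^ (β+1) with hL
    have key2 : 1 + (L - 1)/(β+1) ≤ (1 + 1/(β+1)) * L := by
      rw [← sub_nonneg]
      have hexp : (1 + 1/(β+1)) * L - (1 + (L - 1)/(β+1)) = (L - 1) + 1/(β+1) := by
        field_simp
        ring
      rw [hexp]
      have := one_div_pos.mpr hb1
      linarith
    linarith

private lemma M_bound_lt (β : ℝ) (hβ : β < -1) (ℓ : ℕ) (hℓ : 1 ≤ ℓ) :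
    ∑ h ∈ Finset.Icc 1 ℓ, ((h:ℝ)) ^ β ≤ 1 + 1/(-(β+1)) := by
  have hℓpos : (0:ℝ) < ℓ := by exact_mod_cast hℓ
  have hb1 : (0:ℝ) < -(β + 1) := by linarith
  rw [Icc_split ℓ hℓ, Finset.sum_insert (by simp)]
  have hsum := sum_Icc2_rpow_le β (by linarith) (by linarith) ℓ hℓ
  have h1p : ((1:ℕ):ℝ) ^ β = 1 := by norm_num
  rw [h1p]
  have hLpos : 0 < (ℓ:ℝ) ^ (β+1) := Real.rpow_pos_of_pos hℓpos _
  have hflip : ((ℓ:ℝ) ^ (β+1) - 1)/(β+1) = (1 - (ℓ:ℝ) ^ (β+1))/(-(β+1)) := by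
    rw [div_eq_div_iff (by linarith) (by linarith)]
    ring
  have hle : ((ℓ:ℝ) ^ (β+1) - 1)/(β+1) ≤ 1/(-(β+1)) := by
    rw [hflip]
    apply div_le_div_of_nonneg_right (by linarith) hb1.le |>.trans_eq rfl
  linarith

private lemma M_bound_eq (ℓ : ℕ) (hℓ : 1 ≤ ℓ) :
    ∑ h ∈ Finset.Icc 1 ℓ, ((h:ℝ)) ^ (-1:ℝ) ≤ 1 + Real.log ℓ := by
  rw [Icc_split ℓ hℓ, Finset.sum_insert (by simp)]
  have h1p : ((1:ℕ):ℝ) ^ (-1:ℝ) = 1 := by norm_num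
  rw [h1p]
  linarith [sum_Icc2_harmonic_le ℓ hℓ]

private lemma key_bound (c₁ αw αc C₀ : ℝ) (hc₁ : 0 < c₁) (hαc : 1 < αc) (hC₀ : 0 < C₀)
    (W : ℝ → ℝ) (hW1 : ∀ u, W u ≤ 1)
    (hWlip : ∀ u : ℝ, 1 - W u ≤ c₁ * |u| ^ αw)
    (a : ℕ → ℝ) (ha : ∀ h : ℕ, 1 ≤ h → |a h| ≤ C₀ * (h : ℝ) ^ (-αc)) : ∀ ℓ : ℕ, 2 ≤ ℓ →
    |(∑' h : ℕ, a (h + 1)) - ∑ h ∈ Finset.Icc 1 ℓ, W ((h : ℝ) / ℓ) * a h|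
      ≤ c₁ * C₀ * (ℓ:ℝ) ^ (-αw) * (∑ h ∈ Finset.Icc 1 ℓ, (h:ℝ) ^ (αw - αc))
        + C₀ * ((ℓ:ℝ) ^ (1-αc) / (αc - 1)) := by
  have hs0 : Summable (fun n : ℕ => (n:ℝ) ^ (-αc)) := Real.summable_nat_rpow.mpr (by linarith)
  have hsb : Summable (fun n : ℕ => C₀ * ((n+1:ℕ):ℝ) ^ (-αc)) :=
    ((summable_nat_add_iff 1).mpr hs0).mul_left C₀
  have habs : ∀ h : ℕ, |a (h+1)| ≤ C₀ * ((h+1:ℕ):ℝ) ^ (-αc) := fun h => ha (h+1) (by omega)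
  have hsabs : Summable (fun h : ℕ => |a (h+1)|) :=
    hsb.of_nonneg_of_le (fun n => abs_nonneg _) habs
  have hsa : Summable (fun h : ℕ => a (h+1)) := hsabs.of_abs
  intro ℓ hℓ
  have hℓ1 : 1 ≤ ℓ := by omega
  have hℓpos : (0:ℝ) < ℓ := by exact_mod_cast hℓ1
  have hdecomp := Summable.sum_add_tsum_nat_add (f := fun h : ℕ => a (h+1)) ℓ hsa
  have hrange : ∑ i ∈ Finset.range ℓ, a (i+1) = ∑ h ∈ Finset.Icc 1 ℓ, a h := by
    rw [show Finset.Icc 1 ℓ = Finset.Ico 1 (ℓ+1) from (Finset.Ico_add_one_right_eq_Icc 1 ℓ).symm,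
      Finset.sum_Ico_eq_sum_range]
    simp only [Nat.add_sub_cancel]
    exact Finset.sum_congr rfl fun j _ => by rw [add_comm]
  have hsplit : (∑' h : ℕ, a (h + 1)) - ∑ h ∈ Finset.Icc 1 ℓ, W ((h : ℝ) / ℓ) * a h
      = (∑ h ∈ Finset.Icc 1 ℓ, (1 - W ((h : ℝ) / ℓ)) * a h) + ∑' i : ℕ, a (i + ℓ + 1) := by
    have hsub : ∑ h ∈ Finset.Icc 1 ℓ, (1 - W ((h : ℝ) / ℓ)) * a h
        = ∑ h ∈ Finset.Icc 1 ℓ, a h - ∑ h ∈ Finset.Icc 1 ℓ, W ((h : ℝ) / ℓ) * a h := by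
      rw [← Finset.sum_sub_distrib]
      exact Finset.sum_congr rfl fun h _ => by ring
    rw [hsub, ← hrange, ← hdecomp]
    ring
  rw [hsplit]
  refine le_trans (abs_add_le _ _) (add_le_add ?_ ?_)
  · calc |∑ h ∈ Finset.Icc 1 ℓ, (1 - W ((h : ℝ) / ℓ)) * a h|
        ≤ ∑ h ∈ Finset.Icc 1 ℓ, |(1 - W ((h : ℝ) / ℓ)) * a h| :=
          Finset.abs_sum_le_sum_abs _ _
      _ ≤ ∑ h ∈ Finset.Icc 1 ℓ, (c₁ * C₀ * (ℓ:ℝ) ^ (-αw)) * (h:ℝ) ^ (αw - αc) := by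
          refine Finset.sum_le_sum fun h hh => ?_
          obtain ⟨hh1, hh2⟩ := Finset.mem_Icc.mp hh
          have hpos : (0:ℝ) < h := by exact_mod_cast hh1
          have hu : (0:ℝ) ≤ (h:ℝ)/ℓ := by positivity
          rw [abs_mul, abs_of_nonneg (by linarith [hW1 ((h:ℝ)/ℓ)])]
          calc (1 - W ((h : ℝ) / ℓ)) * |a h|
              ≤ (c₁ * ((h:ℝ)/ℓ) ^ αw) * (C₀ * (h:ℝ) ^ (-αc)) := by
                refine mul_le_mul ?_ (ha h hh1) (abs_nonneg _) (by positivity)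
                have := hWlip ((h:ℝ)/ℓ)
                rwa [abs_of_nonneg hu] at this
            _ = (c₁ * C₀ * (ℓ:ℝ) ^ (-αw)) * (h:ℝ) ^ (αw - αc) := by
                rw [Real.div_rpow hpos.le hℓpos.le, Real.rpow_neg hℓpos.le,
                  show αw - αc = αw + (-αc) by ring, Real.rpow_add hpos]
                ring
      _ = c₁ * C₀ * (ℓ:ℝ) ^ (-αw) * (∑ h ∈ Finset.Icc 1 ℓ, (h:ℝ) ^ (αw - αc)) := by
          rw [← Finset.mul_sum]
  · have hsabs' : Summable (fun i : ℕ => |a (i + ℓ + 1)|) := by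
      have := (summable_nat_add_iff (f := fun h : ℕ => |a (h+1)|) ℓ).mpr hsabs
      simpa using this
    have hsb' : Summable (fun i : ℕ => C₀ * ((i + ℓ + 1:ℕ):ℝ) ^ (-αc)) := by
      have := (summable_nat_add_iff (f := fun n : ℕ => C₀ * ((n+1:ℕ):ℝ) ^ (-αc)) ℓ).mpr hsb
      simpa using this
    calc |∑' i : ℕ, a (i + ℓ + 1)| ≤ ∑' i : ℕ, |a (i + ℓ + 1)| := by
          have h := norm_tsum_le_tsum_norm (f := fun i : ℕ => a (i + ℓ + 1))
            (by simpa only [Real.norm_eq_abs] using hsabs')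
          simpa only [Real.norm_eq_abs] using h
      _ ≤ ∑' i : ℕ, C₀ * ((i + ℓ + 1:ℕ):ℝ) ^ (-αc) := by
          refine Summable.tsum_le_tsum (fun i => ha (i + ℓ + 1) (by omega)) hsabs' hsb'
      _ = C₀ * ∑' i : ℕ, ((i + ℓ + 1:ℕ):ℝ) ^ (-αc) := tsum_mul_left
      _ ≤ C₀ * ((ℓ:ℝ) ^ (1-αc) / (αc - 1)) :=
          mul_le_mul_of_nonneg_left (tail_bound αc hαc ℓ hℓ1) hC₀.le



/-- Trichotomy for the bias of the kernel long-run covariance estimator: with kernel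
weights `W` satisfying `1 − W(u) ≤ c₁|u|^{α_w}` and coefficients `|a_h| ≤ C₀ h^{−α_c}`
(`α_c > 1`), the bias `E_ℓ = |Σ_{h≥1} a_h − Σ_{h=1}^ℓ W(h/ℓ) a_h|` is bounded by
`C ℓ^{1−α_c}`, `C ℓ^{1−α_c} log ℓ`, or `C ℓ^{−α_w}` according to the sign of
`α_w − α_c + 1`. -/
theorem kernel_smoothing_bias_trichotomy
    (c₁ αw αc C₀ : ℝ) (hc₁ : 0 < c₁) (hαw : 0 < αw) (hαc : 1 < αc) (hC₀ : 0 < C₀)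
    (W : ℝ → ℝ) (hW0 : ∀ u, 0 ≤ W u) (hW1 : ∀ u, W u ≤ 1)
    (hWlip : ∀ u : ℝ, 1 - W u ≤ c₁ * |u| ^ αw)
    (a : ℕ → ℝ) (ha : ∀ h : ℕ, 1 ≤ h → |a h| ≤ C₀ * (h : ℝ) ^ (-αc)) :
    ∃ C : ℝ, 0 < C ∧ ∀ ℓ : ℕ, 2 ≤ ℓ →
      (αw - αc > -1 →
        |(∑' h : ℕ, a (h + 1)) - ∑ h ∈ Finset.Icc 1 ℓ, W ((h : ℝ) / ℓ) * a h|
          ≤ C * (ℓ : ℝ) ^ (1 - αc))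
      ∧ (αw - αc = -1 →
        |(∑' h : ℕ, a (h + 1)) - ∑ h ∈ Finset.Icc 1 ℓ, W ((h : ℝ) / ℓ) * a h|
          ≤ C * (ℓ : ℝ) ^ (1 - αc) * Real.log ℓ)
      ∧ (αw - αc < -1 →
        |(∑' h : ℕ, a (h + 1)) - ∑ h ∈ Finset.Icc 1 ℓ, W ((h : ℝ) / ℓ) * a h|
          ≤ C * (ℓ : ℝ) ^ (-αw)) := by
  have hac1 : (0:ℝ) < αc - 1 := by linarith
  have key := key_bound c₁ αw αc C₀ hc₁ hαc hC₀ W hW1 hWlip a ha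
  rcases lt_trichotomy (αw - αc) (-1 : ℝ) with hb | hb | hb
  · -- β < -1
    have hKpos : 0 < 1 + 1/(-(αw - αc + 1)) := by
      have : 0 < 1/(-(αw - αc + 1)) := by
        apply one_div_pos.mpr; linarith
      linarith
    refine ⟨c₁ * C₀ * (1 + 1/(-(αw - αc + 1))) + C₀ / (αc - 1), by positivity, fun ℓ hℓ => ?_⟩
    have hℓpos : (0:ℝ) < ℓ := by positivity
    have hℓ1 : (1:ℝ) ≤ ℓ := by exact_mod_cast (by omega : 1 ≤ ℓ)
    refine ⟨fun h => absurd h (by linarith), fun h => absurd h (by linarith), fun _ => ?_⟩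
    have hM := M_bound_lt (αw - αc) hb ℓ (by omega)
    have hE := key ℓ hℓ
    have hexp : (ℓ:ℝ) ^ (1 - αc) ≤ (ℓ:ℝ) ^ (-αw) :=
      Real.rpow_le_rpow_of_exponent_le hℓ1 (by linarith)
    have hP : (0:ℝ) ≤ (ℓ:ℝ) ^ (-αw) := by positivity
    have hP2 : (0:ℝ) ≤ (ℓ:ℝ) ^ (1 - αc) := by positivity
    have h1 : c₁ * C₀ * (ℓ:ℝ) ^ (-αw) * (∑ h ∈ Finset.Icc 1 ℓ, (h:ℝ) ^ (αw - αc))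
        ≤ c₁ * C₀ * (1 + 1/(-(αw - αc + 1))) * (ℓ:ℝ) ^ (-αw) := by
      have := mul_le_mul_of_nonneg_left hM (by positivity : (0:ℝ) ≤ c₁ * C₀ * (ℓ:ℝ) ^ (-αw))
      calc c₁ * C₀ * (ℓ:ℝ) ^ (-αw) * (∑ h ∈ Finset.Icc 1 ℓ, (h:ℝ) ^ (αw - αc))
          ≤ c₁ * C₀ * (ℓ:ℝ) ^ (-αw) * (1 + 1/(-(αw - αc + 1))) := this
        _ = c₁ * C₀ * (1 + 1/(-(αw - αc + 1))) * (ℓ:ℝ) ^ (-αw) := by ring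
    have h2 : C₀ * ((ℓ:ℝ) ^ (1-αc) / (αc - 1)) ≤ (C₀ / (αc - 1)) * (ℓ:ℝ) ^ (-αw) := by
      rw [show C₀ * ((ℓ:ℝ) ^ (1-αc) / (αc - 1)) = (C₀ / (αc - 1)) * (ℓ:ℝ) ^ (1-αc) by ring]
      exact mul_le_mul_of_nonneg_left hexp (by positivity)
    calc |(∑' h : ℕ, a (h + 1)) - ∑ h ∈ Finset.Icc 1 ℓ, W ((h : ℝ) / ℓ) * a h|
        ≤ c₁ * C₀ * (ℓ:ℝ) ^ (-αw) * (∑ h ∈ Finset.Icc 1 ℓ, (h:ℝ) ^ (αw - αc))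
          + C₀ * ((ℓ:ℝ) ^ (1-αc) / (αc - 1)) := hE
      _ ≤ c₁ * C₀ * (1 + 1/(-(αw - αc + 1))) * (ℓ:ℝ) ^ (-αw) + (C₀ / (αc - 1)) * (ℓ:ℝ) ^ (-αw) := add_le_add h1 h2
      _ = (c₁ * C₀ * (1 + 1/(-(αw - αc + 1))) + C₀ / (αc - 1)) * (ℓ:ℝ) ^ (-αw) := by ring
  · -- β = -1
    have hlog2 : (0:ℝ) < Real.log 2 := Real.log_pos (by norm_num)
    refine ⟨c₁ * C₀ * (1 + 1/Real.log 2) + C₀ / ((αc - 1) * Real.log 2), by positivity,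
      fun ℓ hℓ => ?_⟩
    have hℓpos : (0:ℝ) < ℓ := by positivity
    have hℓ2 : (2:ℝ) ≤ ℓ := by exact_mod_cast hℓ
    refine ⟨fun h => absurd hb (by intro h'; linarith), fun _ => ?_,
      fun h => absurd hb (by intro h'; linarith)⟩
    have hαweq : -αw = 1 - αc := by linarith
    have hM := M_bound_eq ℓ (by omega)
    have hE := key ℓ hℓ
    rw [hb] at hE
    rw [hαweq] at hE
    have hLg : Real.log 2 ≤ Real.log ℓ := Real.log_le_log (by norm_num) hℓ2
    have hLgpos : 0 < Real.log ℓ := lt_of_lt_of_le hlog2 hLg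
    have hP : (0:ℝ) ≤ (ℓ:ℝ) ^ (1 - αc) := by positivity
    have hdiv : 1 ≤ Real.log ℓ / Real.log 2 := (one_le_div hlog2).mpr hLg
    have hS : c₁ * C₀ * (1 + Real.log ℓ) + C₀ / (αc - 1)
        ≤ (c₁ * C₀ * (1 + 1/Real.log 2) + C₀ / ((αc - 1) * Real.log 2)) * Real.log ℓ := by
      have e1 : c₁ * C₀ ≤ c₁ * C₀ * (Real.log ℓ / Real.log 2) := by
        nlinarith [mul_pos hc₁ hC₀]
      have e2 : C₀ / (αc - 1) ≤ (C₀ / (αc - 1)) * (Real.log ℓ / Real.log 2) := by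
        nlinarith [div_pos hC₀ hac1]
      have e3 : (c₁ * C₀ * (1 + 1/Real.log 2) + C₀ / ((αc - 1) * Real.log 2)) * Real.log ℓ
          = c₁ * C₀ * Real.log ℓ + c₁ * C₀ * (Real.log ℓ / Real.log 2)
            + (C₀ / (αc - 1)) * (Real.log ℓ / Real.log 2) := by
        field_simp
      rw [e3]
      nlinarith
    have hMmul : c₁ * C₀ * (ℓ:ℝ) ^ (1-αc) * (∑ h ∈ Finset.Icc 1 ℓ, (h:ℝ) ^ (-1:ℝ))
        ≤ c₁ * C₀ * (ℓ:ℝ) ^ (1-αc) * (1 + Real.log ℓ) :=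
      mul_le_mul_of_nonneg_left hM (by positivity)
    calc |(∑' h : ℕ, a (h + 1)) - ∑ h ∈ Finset.Icc 1 ℓ, W ((h : ℝ) / ℓ) * a h|
        ≤ c₁ * C₀ * (ℓ:ℝ) ^ (1-αc) * (∑ h ∈ Finset.Icc 1 ℓ, (h:ℝ) ^ (-1:ℝ))
          + C₀ * ((ℓ:ℝ) ^ (1-αc) / (αc - 1)) := hE
      _ ≤ c₁ * C₀ * (ℓ:ℝ) ^ (1-αc) * (1 + Real.log ℓ)
          + C₀ * ((ℓ:ℝ) ^ (1-αc) / (αc - 1)) := by linarith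
      _ = (c₁ * C₀ * (1 + Real.log ℓ) + C₀ / (αc - 1)) * (ℓ:ℝ) ^ (1-αc) := by ring
      _ ≤ ((c₁ * C₀ * (1 + 1/Real.log 2) + C₀ / ((αc - 1) * Real.log 2)) * Real.log ℓ)
            * (ℓ:ℝ) ^ (1-αc) := mul_le_mul_of_nonneg_right hS hP
      _ = (c₁ * C₀ * (1 + 1/Real.log 2) + C₀ / ((αc - 1) * Real.log 2))
            * (ℓ:ℝ) ^ (1-αc) * Real.log ℓ := by ring
  · -- β > -1
    have hb1 : (0:ℝ) < αw - αc + 1 := by linarith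
    have hKpos : (0:ℝ) < 1 + 1/(αw - αc + 1) := by
      have := one_div_pos.mpr hb1; linarith
    refine ⟨c₁ * C₀ * (1 + 1/(αw - αc + 1)) + C₀ / (αc - 1), by positivity, fun ℓ hℓ => ?_⟩
    have hℓpos : (0:ℝ) < ℓ := by positivity
    refine ⟨fun _ => ?_, fun h => absurd h (by linarith), fun h => absurd h (by linarith)⟩
    have hM := M_bound_gt (αw - αc) hb ℓ (by omega)
    have hE := key ℓ hℓ
    have hpowmul : (ℓ:ℝ) ^ (-αw) * (ℓ:ℝ) ^ (αw - αc + 1) = (ℓ:ℝ) ^ (1 - αc) := by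
      rw [← Real.rpow_add hℓpos]
      congr 1
      ring
    have h1 : c₁ * C₀ * (ℓ:ℝ) ^ (-αw) * (∑ h ∈ Finset.Icc 1 ℓ, (h:ℝ) ^ (αw - αc))
        ≤ c₁ * C₀ * (1 + 1/(αw - αc + 1)) * (ℓ:ℝ) ^ (1 - αc) := by
      calc c₁ * C₀ * (ℓ:ℝ) ^ (-αw) * (∑ h ∈ Finset.Icc 1 ℓ, (h:ℝ) ^ (αw - αc))
          ≤ c₁ * C₀ * (ℓ:ℝ) ^ (-αw) * ((1 + 1/(αw - αc + 1)) * (ℓ:ℝ) ^ (αw - αc + 1)) :=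
            mul_le_mul_of_nonneg_left hM (by positivity)
        _ = c₁ * C₀ * (1 + 1/(αw - αc + 1)) * ((ℓ:ℝ) ^ (-αw) * (ℓ:ℝ) ^ (αw - αc + 1)) := by
            ring
        _ = c₁ * C₀ * (1 + 1/(αw - αc + 1)) * (ℓ:ℝ) ^ (1 - αc) := by rw [hpowmul]
    calc |(∑' h : ℕ, a (h + 1)) - ∑ h ∈ Finset.Icc 1 ℓ, W ((h : ℝ) / ℓ) * a h|
        ≤ c₁ * C₀ * (ℓ:ℝ) ^ (-αw) * (∑ h ∈ Finset.Icc 1 ℓ, (h:ℝ) ^ (αw - αc))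
          + C₀ * ((ℓ:ℝ) ^ (1-αc) / (αc - 1)) := hE
      _ ≤ c₁ * C₀ * (1 + 1/(αw - αc + 1)) * (ℓ:ℝ) ^ (1 - αc)
          + (C₀ / (αc - 1)) * (ℓ:ℝ) ^ (1 - αc) := by
          refine add_le_add h1 (le_of_eq ?_)
          ring
      _ = (c₁ * C₀ * (1 + 1/(αw - αc + 1)) + C₀ / (αc - 1)) * (ℓ:ℝ) ^ (1 - αc) := by ring
end
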